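/- Let ε > 0 and n ≥ 2. If a directed graph D on n vertices (with no loops, but in which both edges xy and yx may be present) has at least (1+ε)·binom(n,2) edges, then D contains a copy of every oriented tree of order at most ⌈εn/2⌉. In particular, given any 2-colouring (red/blue) of the complete directed graph on n vertices in which at least (1+ε)·binom(n,2) edges are blue, there is a blue copy of every oriented tree of order at most ⌈εn/2⌉. -/

import Mathlib

section Aux
open Finset

lemma exists_cross_edge {V : Type*} {G : SimpleGraph V} {S : Set V} {u v : V}
    (w : G.Walk u v) (hu : u ∈ S) (hv : v ∉ S) :
    ∃ a b, a ∈ S ∧ b ∉ S ∧ G.Adj a b := by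
  induction w with
  | nil => exact absurd hu hv
  | @cons x y z h p ih =>
    by_cases hy : y ∈ S
    · exact ih hy hv
    · exact ⟨x, y, hu, hy, h⟩

lemma exists_connected_order {m : ℕ} (hm : 1 ≤ m) {G : SimpleGraph (Fin m)}
    (hG : G.Connected) :
    ∃ σ : Fin m → Fin m, Function.Bijective σ ∧
      ∀ i : Fin m, 0 < i.val → ∃ j : Fin m, j < i ∧ G.Adj (σ j) (σ i) := by
  classical
  have key : ∀ k, 1 ≤ k → k ≤ m → ∃ g : Fin k → Fin m, Function.Injective g ∧
      ∀ i : Fin k, 0 < i.val → ∃ j : Fin k, j < i ∧ G.Adj (g j) (g i) := by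
    intro k
    induction k with
    | zero => omega
    | succ k ih =>
      intro _ hk
      rcases Nat.eq_zero_or_pos k with hk0 | hk1
      · subst hk0
        refine ⟨fun _ => ⟨0, by omega⟩, fun a b _ => by
          have : a = b := by omega
          exact this, ?_⟩
        intro i hi
        have := i.isLt; omega
      · obtain ⟨g, hginj, hgord⟩ := ih hk1 (by omega)
        have hcard : (Finset.univ.image g).card < m := by
          have := Finset.card_image_le (s := (Finset.univ : Finset (Fin k))) (f := g)
          simp only [Finset.card_univ, Fintype.card_fin] at this
          omega
        obtain ⟨v, hv⟩ : ∃ v : Fin m, v ∉ Finset.univ.image g := by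
          by_contra hc
          push_neg at hc
          have h2 := Finset.card_le_card (fun x _ => hc x :
            (Finset.univ : Finset (Fin m)) ⊆ Finset.univ.image g)
          simp only [Finset.card_univ, Fintype.card_fin] at h2
          omega
        have hu : g ⟨0, hk1⟩ ∈ (↑(Finset.univ.image g) : Set (Fin m)) := by simp
        have hv' : v ∉ (↑(Finset.univ.image g) : Set (Fin m)) := by simpa using hv
        obtain ⟨a, b, ha, hb, hab⟩ :=
          exists_cross_edge ((hG (g ⟨0, hk1⟩) v).some) hu hv'
        obtain ⟨j0, -, hj0⟩ : ∃ j0 ∈ Finset.univ, g j0 = a := by simpa using ha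
        have hbim : ∀ j : Fin k, b ≠ g j := by
          intro j hbj
          exact hb (by simp [hbj])
        refine ⟨Fin.snoc g b, ?_, ?_⟩
        · intro x y hxy
          induction x using Fin.lastCases with
          | last =>
            induction y using Fin.lastCases with
            | last => rfl
            | cast j =>
              rw [Fin.snoc_last, Fin.snoc_castSucc] at hxy
              exact absurd hxy (hbim j)
          | cast i =>
            induction y using Fin.lastCases with
            | last =>
              rw [Fin.snoc_last, Fin.snoc_castSucc] at hxy
              exact absurd hxy.symm (hbim i)
            | cast j =>
              rw [Fin.snoc_castSucc, Fin.snoc_castSucc] at hxy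
              exact congrArg Fin.castSucc (hginj hxy)
        · intro i hi
          induction i using Fin.lastCases with
          | last =>
            refine ⟨j0.castSucc, ?_, ?_⟩
            · have := j0.isLt
              simp [Fin.lt_def, Fin.last]
            · rw [Fin.snoc_last, Fin.snoc_castSucc, hj0]
              exact hab
          | cast i =>
            have hi' : 0 < i.val := by simpa using hi
            obtain ⟨j, hj, hadj⟩ := hgord i hi'
            refine ⟨j.castSucc, Fin.castSucc_lt_castSucc_iff.mpr hj, ?_⟩
            rw [Fin.snoc_castSucc, Fin.snoc_castSucc]
            exact hadj
  obtain ⟨g, hginj, hgord⟩ := key m hm le_rfl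
  exact ⟨g, (Finite.injective_iff_bijective).mp hginj, hgord⟩

/-- For a tree, a connected ordering together with a parent map covering all edges. -/
lemma exists_parent_structure {m : ℕ} (hm : 1 ≤ m) {G : SimpleGraph (Fin m)}
    (hT : G.IsTree) :
    ∃ (σ : Fin m → Fin m) (p : Fin m → Fin m), Function.Bijective σ ∧
      (∀ i : Fin m, 0 < i.val → p i < i ∧ G.Adj (σ (p i)) (σ i)) ∧
      (∀ a b : Fin m, G.Adj a b →
        ∃ i : Fin m, 0 < i.val ∧
          ((σ (p i) = a ∧ σ i = b) ∨ (σ (p i) = b ∧ σ i = a))) := by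
  classical
  obtain ⟨σ, hσ, hord⟩ := exists_connected_order hm hT.isConnected
  set e := Equiv.ofBijective σ hσ with he
  -- the set of "ordered edges" in index form
  set Q : Finset (Fin m × Fin m) :=
    Finset.univ.filter (fun q => q.1 < q.2 ∧ G.Adj (σ q.1) (σ q.2)) with hQ
  set P : Fin m → Finset (Fin m) :=
    fun i => Finset.univ.filter (fun j => j < i ∧ G.Adj (σ j) (σ i)) with hP
  have hQcard : Q.card = G.edgeFinset.card := by
    apply Finset.card_bij (s := Q) (t := G.edgeFinset) (fun (q : Fin m × Fin m) _ => s(σ q.1, σ q.2))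
    · intro q hq
      simp only [hQ, Finset.mem_filter] at hq
      simpa [SimpleGraph.mem_edgeFinset] using hq.2.2
    · intro q hq r hr hqr
      simp only [hQ, Finset.mem_filter] at hq hr
      replace hqr := (Sym2.mk_eq_mk_iff (p := (σ q.1, σ q.2)) (q := (σ r.1, σ r.2))).mp hqr
      rcases hqr with h | h
      · exact Prod.ext (hσ.1 (congrArg Prod.fst h)) (hσ.1 (congrArg Prod.snd h))
      · exfalso
        have h1 : σ q.1 = σ r.2 := congrArg Prod.fst h
        have h2 : σ q.2 = σ r.1 := congrArg Prod.snd h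
        have e1 := hσ.1 h1
        have e2 := hσ.1 h2
        have hqlt := hq.2.1
        have hrlt := hr.2.1
        rw [e1, e2] at hqlt
        exact absurd (lt_trans hrlt hqlt) (lt_irrefl _)
    · intro ed hed
      induction ed with
      | _ a b =>
        rw [SimpleGraph.mem_edgeFinset] at hed
        have hab : G.Adj a b := hed
        rcases lt_trichotomy (e.symm a) (e.symm b) with h | h | h
        · refine ⟨(e.symm a, e.symm b), ?_, ?_⟩
          · simp only [hQ, Finset.mem_filter]
            refine ⟨Finset.mem_univ _, h, ?_⟩
            have : σ (e.symm a) = a := e.apply_symm_apply a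
            have hb' : σ (e.symm b) = b := e.apply_symm_apply b
            rw [this, hb']; exact hab
          · have : σ (e.symm a) = a := e.apply_symm_apply a
            have hb' : σ (e.symm b) = b := e.apply_symm_apply b
            simp [this, hb']
        · exfalso
          have := congrArg e h
          simp at this
          exact hab.ne this
        · refine ⟨(e.symm b, e.symm a), ?_, ?_⟩
          · simp only [hQ, Finset.mem_filter]
            refine ⟨Finset.mem_univ _, h, ?_⟩
            have ha' : σ (e.symm a) = a := e.apply_symm_apply a
            have hb' : σ (e.symm b) = b := e.apply_symm_apply b
            rw [ha', hb']; exact hab.symm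
          · have ha' : σ (e.symm a) = a := e.apply_symm_apply a
            have hb' : σ (e.symm b) = b := e.apply_symm_apply b
            simp [ha', hb', Sym2.eq_swap]
  have hQsum : Q.card = ∑ i : Fin m, (P i).card := by
    rw [Finset.card_eq_sum_card_fiberwise
      (f := fun q : Fin m × Fin m => q.2) (t := Finset.univ) (fun q _ => Finset.mem_univ _)]
    apply Finset.sum_congr rfl
    intro i _
    apply Finset.card_bij (fun q _ => q.1)
    · intro q hq
      simp only [hQ, hP, Finset.mem_filter] at hq ⊢
      rcases hq with ⟨⟨-, h1, h2⟩, h3⟩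
      exact ⟨Finset.mem_univ _, h3 ▸ h1, h3 ▸ h2⟩
    · intro q hq r hr hqr
      simp only [hQ, Finset.mem_filter] at hq hr
      exact Prod.ext hqr (hq.2.trans hr.2.symm)
    · intro j hj
      simp only [hP, Finset.mem_filter] at hj
      exact ⟨(j, i), by simp [hQ, hj.2.1, hj.2.2], rfl⟩
  have hedge : G.edgeFinset.card + 1 = m := by
    have := hT.card_edgeFinset
    simpa using this
  have hP0 : ∀ i : Fin m, i.val = 0 → (P i).card = 0 := by
    intro i hi
    rw [Finset.card_eq_zero]
    ext j
    simp only [hP, Finset.mem_filter, Finset.notMem_empty, iff_false]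
    rintro ⟨-, hj, -⟩
    rw [Fin.lt_def, hi] at hj
    omega
  set s : Finset (Fin m) := Finset.univ.filter (fun i => 0 < i.val) with hs
  have hscard : s.card = m - 1 := by
    have : Finset.univ.filter (fun i : Fin m => ¬ 0 < i.val) = {⟨0, hm⟩} := by
      ext i
      simp only [Finset.mem_filter, Finset.mem_univ, true_and, Finset.mem_singleton]
      constructor
      · intro h
        have : i.val = 0 := by omega
        exact Fin.ext (by simp [this])
      · intro h; subst h; simp
    have h2 := Finset.card_filter_add_card_filter_not
      (s := (Finset.univ : Finset (Fin m))) (p := fun i : Fin m => 0 < i.val)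
    rw [this] at h2
    simp only [Finset.card_singleton, Finset.card_univ, Fintype.card_fin] at h2
    rw [hs]
    omega
  have hsum' : ∑ i ∈ s, (P i).card = m - 1 := by
    have h1 : ∑ i ∈ s, (P i).card +
        ∑ i ∈ Finset.univ.filter (fun i : Fin m => ¬ 0 < i.val), (P i).card
        = ∑ i : Fin m, (P i).card :=
      Finset.sum_filter_add_sum_filter_not Finset.univ (fun i : Fin m => 0 < i.val) _
    have h2 : ∑ i ∈ Finset.univ.filter (fun i : Fin m => ¬ 0 < i.val), (P i).card = 0 := by
      apply Finset.sum_eq_zero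
      intro i hi
      simp only [Finset.mem_filter] at hi
      exact hP0 i (by omega)
    rw [h2] at h1
    omega
  have hone : ∀ i ∈ s, (P i).card = 1 := by
    have hle : ∀ i ∈ s, 1 ≤ (P i).card := by
      intro i hi
      simp only [hs, Finset.mem_filter] at hi
      obtain ⟨j, hj1, hj2⟩ := hord i hi.2
      rw [Nat.one_le_iff_ne_zero, ← Nat.pos_iff_ne_zero, Finset.card_pos]
      exact ⟨j, by simp [hP, hj1, hj2]⟩
    have heq : ∑ i ∈ s, (1 : ℕ) = ∑ i ∈ s, (P i).card := by
      rw [hsum', Finset.sum_const, smul_eq_mul, mul_one, hscard]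
    intro i hi
    exact ((Finset.sum_eq_sum_iff_of_le hle).mp heq i hi).symm
  -- define parent
  have hchoice : ∀ i : Fin m, 0 < i.val → ∃ j, P i = {j} := by
    intro i hi
    exact Finset.card_eq_one.mp (hone i (by simp [hs, hi]))
  choose pj hpj using hchoice
  have hpd : ∀ (i : Fin m) (h : 0 < i.val),
      (fun i => if h : 0 < i.val then pj i h else i) i = pj i h := by
    intro i h
    show (if h : 0 < i.val then pj i h else i) = pj i h
    exact dif_pos h
  refine ⟨σ, fun i => if h : 0 < i.val then pj i h else i, hσ, ?_, ?_⟩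
  · intro i hi
    rw [hpd i hi]
    have : pj i hi ∈ P i := by rw [hpj i hi]; exact Finset.mem_singleton_self _
    simp only [hP, Finset.mem_filter] at this
    exact ⟨this.2.1, this.2.2⟩
  · intro a b hab
    rcases lt_trichotomy (e.symm a) (e.symm b) with h | h | h
    · have hi : 0 < (e.symm b).val := by
        have := (e.symm a).2; rw [Fin.lt_def] at h; omega
      refine ⟨e.symm b, hi, Or.inl ⟨?_, e.apply_symm_apply b⟩⟩
      rw [hpd _ hi]
      have hmem : e.symm a ∈ P (e.symm b) := by
        simp only [hP, Finset.mem_filter]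
        refine ⟨Finset.mem_univ _, h, ?_⟩
        rw [show σ (e.symm a) = a from e.apply_symm_apply a,
          show σ (e.symm b) = b from e.apply_symm_apply b]
        exact hab
      rw [hpj (e.symm b) hi, Finset.mem_singleton] at hmem
      rw [← hmem]
      exact e.apply_symm_apply a
    · exfalso
      have := congrArg e h
      simp at this
      exact hab.ne this
    · have hi : 0 < (e.symm a).val := by
        have := (e.symm b).2; rw [Fin.lt_def] at h; omega
      refine ⟨e.symm a, hi, Or.inr ⟨?_, e.apply_symm_apply a⟩⟩
      rw [hpd _ hi]
      have hmem : e.symm b ∈ P (e.symm a) := by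
        simp only [hP, Finset.mem_filter]
        refine ⟨Finset.mem_univ _, h, ?_⟩
        rw [show σ (e.symm a) = a from e.apply_symm_apply a,
          show σ (e.symm b) = b from e.apply_symm_apply b]
        exact hab.symm
      rw [hpj (e.symm a) hi, Finset.mem_singleton] at hmem
      rw [← hmem]
      exact e.apply_symm_apply b


/-- Greedy embedding of a parent-structured tree into a set with large min degree. -/
lemma greedy_embed {n m : ℕ} (G' : Fin n → Fin n → Prop)
    (hirr : ∀ x, ¬ G' x x) (S : Finset (Fin n)) (hS : S.Nonempty)
    [DecidableRel G']
    (hdeg : ∀ v ∈ S, m - 1 ≤ (S.filter (fun u => G' v u)).card)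
    (p : Fin m → Fin m) (hp : ∀ i : Fin m, 0 < i.val → p i < i) :
    ∃ f : Fin m → Fin n, Function.Injective f ∧ (∀ i, f i ∈ S) ∧
      ∀ i : Fin m, 0 < i.val → G' (f (p i)) (f i) := by
  classical
  have key : ∀ k, k ≤ m → ∃ f : ℕ → Fin n,
      (∀ i, i < k → f i ∈ S) ∧
      (∀ i j, i < k → j < k → f i = f j → i = j) ∧
      (∀ i : Fin m, 0 < i.val → i.val < k → G' (f (p i).val) (f i.val)) := by
    intro k
    induction k with
    | zero => exact fun _ => ⟨fun _ => hS.choose, by omega, by omega, by omega⟩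
    | succ k ih =>
      intro hk1
      obtain ⟨f, hfS, hfinj, hford⟩ := ih (by omega)
      rcases Nat.eq_zero_or_pos k with hk0 | hkpos
      · subst hk0
        refine ⟨fun _ => hS.choose, fun i _ => hS.choose_spec, ?_, ?_⟩
        · intro i j hi hj _; omega
        · intro i hi hik; omega
      · -- extend: vertex k, parent p ⟨k,_⟩
        have hkm : k < m := by omega
        set i0 : Fin m := ⟨k, hkm⟩ with hi0
        have hpi0 := hp i0 (by simp [hi0, hkpos])
        have hpk : (p i0).val < k := hpi0
        set v := f (p i0).val with hv
        have hvS : v ∈ S := hfS _ hpk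
        set N := S.filter (fun u => G' v u) with hN
        set Used := (Finset.range k).image f with hUsed
        have hUcard : Used.card ≤ k := le_trans (Finset.card_image_le) (by simp)
        have hvU : v ∈ Used := Finset.mem_image.mpr ⟨(p i0).val, by simp [hpk], rfl⟩
        have hvN : v ∉ N := by
          simp only [hN, Finset.mem_filter]
          exact fun h => hirr v h.2
        obtain ⟨b, hbN, hbU⟩ : ∃ b ∈ N, b ∉ Used := by
          by_contra hc
          push_neg at hc
          have hsub : N ⊆ Used.erase v := fun x hx =>
            Finset.mem_erase.mpr ⟨fun hxv => hvN (hxv ▸ hx), hc x hx⟩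
          have h1 := Finset.card_le_card hsub
          have h2 : (Used.erase v).card = Used.card - 1 := Finset.card_erase_of_mem hvU
          have h3 := hdeg v hvS
          rw [← hN] at h3
          have hUpos : 0 < Used.card := Finset.card_pos.mpr ⟨v, hvU⟩
          omega
        refine ⟨Function.update f k b, ?_, ?_, ?_⟩
        · intro i hi
          rcases Nat.lt_or_ge i k with h | h
          · rw [Function.update_of_ne (by omega)]
            exact hfS i h
          · have : i = k := by omega
            subst this
            rw [Function.update_self]
            simp only [hN, Finset.mem_filter] at hbN
            exact hbN.1
        · intro i j hi hj hij
          rcases Nat.lt_or_ge i k with h | h <;> rcases Nat.lt_or_ge j k with h' | h'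
          · rw [Function.update_of_ne (by omega), Function.update_of_ne (by omega)] at hij
            exact hfinj i j h h' hij
          · have hj' : j = k := by omega
            subst hj'
            rw [Function.update_of_ne (by omega), Function.update_self] at hij
            exact absurd (Finset.mem_image.mpr ⟨i, by simp [h], hij⟩) hbU
          · have hi' : i = k := by omega
            subst hi'
            rw [Function.update_self, Function.update_of_ne (by omega)] at hij
            exact absurd (Finset.mem_image.mpr ⟨j, by simp [h'], hij.symm⟩) hbU
          · omega
        · intro i hi hik
          rcases Nat.lt_or_ge i.val k with h | h
          · have hpik : (p i).val < k := lt_trans (hp i hi) h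
            rw [Function.update_of_ne (show (p i).val ≠ k by omega),
              Function.update_of_ne (show i.val ≠ k by omega)]
            exact hford i hi h
          · have : i = i0 := Fin.ext (show i.val = k by omega)
            subst this
            rw [Function.update_of_ne (show (p i0).val ≠ k by omega), Function.update_self]
            simp only [hN, Finset.mem_filter] at hbN
            exact hbN.2
  obtain ⟨f, hfS, hfinj, hford⟩ := key m le_rfl
  refine ⟨fun i => f i.val, ?_, fun i => hfS i.val i.isLt, fun i hi => hford i hi i.isLt⟩
  intro x y hxy
  exact Fin.ext (hfinj x.val y.val x.isLt y.isLt hxy)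

/-- Deletion argument: a symmetric irreflexive graph with many edges inside `S`
has a nonempty subset of large minimum degree. -/
lemma exists_min_degree_subset {n k : ℕ} (G' : Fin n → Fin n → Prop)
    (hsymm : ∀ x y, G' x y → G' y x) (hirr : ∀ x, ¬ G' x x)
    [DecidableRel G'] :
    ∀ S : Finset (Fin n),
      2 * k * S.card <
        ((S ×ˢ S).filter (fun q : Fin n × Fin n => G' q.1 q.2)).card →
      ∃ T, T ⊆ S ∧ T.Nonempty ∧
        ∀ v ∈ T, k + 1 ≤ (T.filter (fun u => G' v u)).card := by
  classical
  intro S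
  induction S using Finset.strongInduction with
  | _ S ih =>
    intro hS
    by_cases hall : ∀ v ∈ S, k + 1 ≤ (S.filter (fun u => G' v u)).card
    · refine ⟨S, le_refl _, ?_, hall⟩
      rw [Finset.nonempty_iff_ne_empty]
      rintro rfl
      simp at hS
    · push_neg at hall
      obtain ⟨v, hvS, hvdeg⟩ := hall
      have hvdeg' : (S.filter (fun u => G' v u)).card ≤ k := by omega
      set S' := S.erase v with hS'
      set E := fun T : Finset (Fin n) =>
        ((T ×ˢ T).filter (fun q : Fin n × Fin n => G' q.1 q.2)) with hE
      -- edges of S not in S' touch v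
      have hsplit : (E S).card ≤ (E S').card + 2 * k := by
        have hsub : E S ⊆ E S' ∪ ((E S).filter (fun q => q.1 = v))
            ∪ ((E S).filter (fun q => q.2 = v)) := by
          intro q hq
          simp only [hE, Finset.mem_filter, Finset.mem_product] at hq
          have hqES : q ∈ E S := by
            simp only [hE, Finset.mem_filter, Finset.mem_product]
            exact hq
          by_cases h1 : q.1 = v
          · simp only [Finset.mem_union, Finset.mem_filter]
            left; right
            exact ⟨hqES, h1⟩
          · by_cases h2 : q.2 = v
            · simp only [Finset.mem_union, Finset.mem_filter]
              right
              exact ⟨hqES, h2⟩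
            · simp only [Finset.mem_union]
              left; left
              simp only [hE, Finset.mem_filter, Finset.mem_product, hS']
              exact ⟨⟨Finset.mem_erase.mpr ⟨h1, hq.1.1⟩, Finset.mem_erase.mpr ⟨h2, hq.1.2⟩⟩, hq.2⟩
        have hc1 : ((E S).filter (fun q => q.1 = v)).card ≤ k := by
          refine le_trans (Finset.card_le_card_of_injOn (fun q => q.2) ?_ ?_) hvdeg'
          · intro q hq
            simp only [hE, Finset.mem_coe, Finset.mem_filter, Finset.mem_product] at hq
            simp only [Finset.mem_coe, Finset.mem_filter]
            exact ⟨hq.1.1.2, hq.2 ▸ hq.1.2⟩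
          · intro q hq r hr hqr
            simp only [Finset.mem_coe, Finset.mem_filter] at hq hr
            exact Prod.ext (hq.2.trans hr.2.symm) hqr
        have hc2 : ((E S).filter (fun q => q.2 = v)).card ≤ k := by
          refine le_trans (Finset.card_le_card_of_injOn (fun q => q.1) ?_ ?_) hvdeg'
          · intro q hq
            simp only [hE, Finset.mem_coe, Finset.mem_filter, Finset.mem_product] at hq
            simp only [Finset.mem_coe, Finset.mem_filter]
            exact ⟨hq.1.1.1, hsymm _ _ (hq.2 ▸ hq.1.2)⟩
          · intro q hq r hr hqr
            simp only [Finset.mem_coe, Finset.mem_filter] at hq hr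
            exact Prod.ext hqr (hq.2.trans hr.2.symm)
        calc (E S).card ≤ (E S' ∪ (E S).filter (fun q => q.1 = v)
              ∪ (E S).filter (fun q => q.2 = v)).card := Finset.card_le_card hsub
          _ ≤ (E S').card + ((E S).filter (fun q => q.1 = v)).card
              + ((E S).filter (fun q => q.2 = v)).card := by
            refine le_trans (Finset.card_union_le _ _) ?_
            exact Nat.add_le_add_right (Finset.card_union_le _ _) _
          _ ≤ (E S').card + 2 * k := by omega
      have hScard : 0 < S.card := Finset.card_pos.mpr ⟨v, hvS⟩
      have hS'card : S'.card = S.card - 1 := Finset.card_erase_of_mem hvS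
      have hrec : 2 * k * S'.card < (E S').card := by
        have hS2 : 2 * k * S.card < (E S).card := hS
        have hm : 2 * k * S'.card + 2 * k = 2 * k * S.card := by
          rw [hS'card]
          have h4 : S.card = (S.card - 1) + 1 := by omega
          calc 2 * k * (S.card - 1) + 2 * k = 2 * k * ((S.card - 1) + 1) := by ring
            _ = 2 * k * S.card := by rw [← h4]
        omega
      obtain ⟨T, hTsub, hTne, hTdeg⟩ := ih S' (Finset.erase_ssubset hvS) hrec
      exact ⟨T, le_trans hTsub (Finset.erase_subset _ _), hTne, hTdeg⟩

end Aux



/-- The underlying simple graph of a directed graph given as a relation. -/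
def Underlying {V : Type*} (t : V → V → Prop) : SimpleGraph V where
  Adj x y := x ≠ y ∧ (t x y ∨ t y x)
  symm := ⟨fun _ _ h => ⟨Ne.symm h.1, Or.symm h.2⟩⟩
  loopless := ⟨fun _ h => h.1 rfl⟩

/-- An oriented tree: no bidirected edges, and the underlying graph is a tree. -/
def IsOrientedTree {V : Type*} (t : V → V → Prop) : Prop :=
  (∀ x y, t x y → ¬ t y x) ∧ (Underlying t).IsTree

/-- A tournament: no loops, and between any two distinct vertices exactly one
directed edge. -/
def IsTournament {V : Type*} (T : V → V → Prop) : Prop :=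
  (∀ x, ¬ T x x) ∧ ∀ x y : V, x ≠ y → (T x y ↔ ¬ T y x)

/-- If a loopless directed graph `D` on `n ≥ 2` vertices (antiparallel
edges allowed) has at least `(1 + ε) · n(n-1)/2` edges, then it contains a copy of
every oriented tree of order at most `⌈ε n / 2⌉`. -/
theorem dense_digraph_contains_trees (n : ℕ) (hn : 2 ≤ n) (ε : ℝ) (hε : 0 < ε)
    (D : Fin n → Fin n → Prop) (hloop : ∀ x, ¬ D x x)
    (hE : (1 + ε) * ((n : ℝ) * ((n : ℝ) - 1) / 2) ≤
      ({p : Fin n × Fin n | D p.1 p.2}.ncard : ℝ)) :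
    ∀ (m : ℕ) (t : Fin m → Fin m → Prop), IsOrientedTree t → m ≤ ⌈ε * n / 2⌉₊ →
      ∃ f : Fin m → Fin n, Function.Injective f ∧ ∀ x y, t x y → D (f x) (f y) := by
  classical
  set G' : Fin n → Fin n → Prop := fun x y => D x y ∧ D y x with hG'
  have hsymm : ∀ x y, G' x y → G' y x := fun x y h => ⟨h.2, h.1⟩
  have hirr : ∀ x, ¬ G' x x := fun x h => hloop x h.1
  set A : Finset (Fin n × Fin n) :=
    Finset.univ.filter (fun p : Fin n × Fin n => D p.1 p.2) with hA
  have hAset : {p : Fin n × Fin n | D p.1 p.2} = ↑A := by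
    ext p; simp [hA]
  rw [hAset, Set.ncard_coe_finset] at hE
  set DG : Finset (Fin n × Fin n) :=
    ((Finset.univ ×ˢ Finset.univ).filter (fun q : Fin n × Fin n => G' q.1 q.2)) with hDG
  set A' : Finset (Fin n × Fin n) := A.image Prod.swap with hA'
  have hmemA' : ∀ p : Fin n × Fin n, p ∈ A' ↔ D p.2 p.1 := by
    intro p
    simp only [hA', Finset.mem_image, hA, Finset.mem_filter, Finset.mem_univ, true_and]
    constructor
    · rintro ⟨q, hq, rfl⟩; exact hq
    · intro h; exact ⟨p.swap, h, Prod.swap_swap p⟩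
  have hA'card : A'.card = A.card := Finset.card_image_of_injective _ Prod.swap_injective
  have hsubO : A ∪ A' ⊆ Finset.univ.offDiag := by
    intro p hp
    rcases Finset.mem_union.mp hp with h | h
    · simp only [hA, Finset.mem_filter] at h
      simp only [Finset.mem_offDiag]
      exact ⟨Finset.mem_univ _, Finset.mem_univ _, fun he => hloop p.1 (he ▸ h.2)⟩
    · rw [hmemA' p] at h
      simp only [Finset.mem_offDiag]
      exact ⟨Finset.mem_univ _, Finset.mem_univ _, fun he => hloop p.1 (he ▸ h)⟩
  have hinter : A ∩ A' = DG := by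
    ext p
    simp only [Finset.mem_inter, hA, Finset.mem_filter, Finset.mem_univ, true_and,
      hmemA', hDG, Finset.mem_product, and_true, hG']
  have hcards := Finset.card_union_add_card_inter A A'
  have hO : (Finset.univ : Finset (Fin n)).offDiag.card = n * n - n := by
    rw [Finset.offDiag_card]
    simp
  have hkey : 2 * A.card ≤ (n * n - n) + DG.card := by
    have h1 := Finset.card_le_card hsubO
    rw [hO] at h1
    rw [hinter] at hcards
    omega
  -- real arithmetic
  have hnR : (2 : ℝ) ≤ (n : ℝ) := by exact_mod_cast hn
  have hnn : ((n * n - n : ℕ) : ℝ) = (n : ℝ) * n - n := by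
    have : n ≤ n * n := Nat.le_mul_of_pos_left n (by omega)
    push_cast [this]
    ring
  have hAO : A.card ≤ n * n - n := by
    have := Finset.card_le_card (fun p hp => hsubO (Finset.mem_union_left _ hp))
    omega
  have hε1 : ε ≤ 1 := by
    have h1 : ((A.card : ℕ) : ℝ) ≤ (n : ℝ) * n - n := by
      calc ((A.card : ℕ) : ℝ) ≤ ((n * n - n : ℕ) : ℝ) := by exact_mod_cast hAO
        _ = (n : ℝ) * n - n := hnn
    have hpos : (0 : ℝ) < (n : ℝ) * ((n : ℝ) - 1) / 2 := by nlinarith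
    have h2 : (1 + ε) * ((n : ℝ) * ((n : ℝ) - 1) / 2) ≤ 2 * ((n : ℝ) * ((n : ℝ) - 1) / 2) := by
      nlinarith
    have h3 : (1 + ε) ≤ 2 := le_of_mul_le_mul_right (by nlinarith) hpos
    linarith
  have hd : ε * n * ((n : ℝ) - 1) ≤ (DG.card : ℝ) := by
    have h2 : (2 : ℝ) * A.card ≤ ((n : ℝ) * n - n) + DG.card := by
      calc (2 : ℝ) * A.card = ((2 * A.card : ℕ) : ℝ) := by push_cast; ring
        _ ≤ (((n * n - n) + DG.card : ℕ) : ℝ) := by exact_mod_cast hkey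
        _ = ((n : ℝ) * n - n) + DG.card := by rw [Nat.cast_add, hnn]
    nlinarith
  intro m t htree hmle
  rcases Nat.lt_or_ge m 2 with hm2 | hm2
  · -- trivial cases m ≤ 1
    refine ⟨fun _ => ⟨0, by omega⟩, ?_, ?_⟩
    · intro a b _
      exact Fin.ext (by omega)
    · intro x y hxy
      have hxy' : x = y := Fin.ext (by omega)
      subst hxy'
      exact absurd hxy (htree.1 x x hxy)
  · set k := m - 2 with hk
    have hceil : (m : ℝ) < ε * n / 2 + 1 := by
      calc (m : ℝ) ≤ (⌈ε * n / 2⌉₊ : ℝ) := by exact_mod_cast hmle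
        _ < ε * n / 2 + 1 := Nat.ceil_lt_add_one (by positivity)
    have h2kn : 2 * k * n < DG.card := by
      have hkR : ((k : ℕ) : ℝ) = (m : ℝ) - 2 := by
        rw [hk]; push_cast [hm2]; ring
      have hlt : ((2 * k * n : ℕ) : ℝ) < (DG.card : ℝ) := by
        push_cast [hkR]
        nlinarith
      exact_mod_cast hlt
    obtain ⟨T, hTsub, hTne, hTdeg⟩ := exists_min_degree_subset G' hsymm hirr Finset.univ
      (by simpa [hDG] using h2kn)
    have hdeg' : ∀ v ∈ T, m - 1 ≤ (T.filter (fun u => G' v u)).card := by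
      intro v hv
      have := hTdeg v hv
      omega
    obtain ⟨σ, p, hσ, hpar, hcov⟩ := exists_parent_structure (m := m) (by omega) htree.2
    obtain ⟨f₀, hf₀inj, hf₀mem, hf₀ord⟩ := greedy_embed G' hirr T hTne hdeg' p
      (fun i hi => (hpar i hi).1)
    set eσ := Equiv.ofBijective σ hσ with heσ
    refine ⟨fun x => f₀ (eσ.symm x), ?_, ?_⟩
    · intro x y hxy
      exact eσ.symm.injective (hf₀inj hxy)
    · intro x y hxy
      have hne : x ≠ y := fun h => htree.1 x y hxy (h ▸ hxy)
      have hAdj : (Underlying t).Adj x y := ⟨hne, Or.inl hxy⟩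
      obtain ⟨i, hi, hcase⟩ := hcov x y hAdj
      have hG'i := hf₀ord i hi
      rcases hcase with ⟨h1, h2⟩ | ⟨h1, h2⟩
      · have hx : eσ.symm x = p i := by
          apply eσ.injective
          rw [Equiv.apply_symm_apply]
          exact h1.symm
        have hy : eσ.symm y = i := by
          apply eσ.injective
          rw [Equiv.apply_symm_apply]
          exact h2.symm
        show D (f₀ (eσ.symm x)) (f₀ (eσ.symm y))
        rw [hx, hy]
        exact hG'i.1
      · have hx : eσ.symm x = i := by
          apply eσ.injective
          rw [Equiv.apply_symm_apply]
          exact h2.symm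
        have hy : eσ.symm y = p i := by
          apply eσ.injective
          rw [Equiv.apply_symm_apply]
          exact h1.symm
        show D (f₀ (eσ.symm x)) (f₀ (eσ.symm y))
        rw [hx, hy]
        exact hG'i.2
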